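/- Let (B, s, t) be a bi-submersion over a singular foliation F on M. If a vector field X on M admits a lift to B, i.e. a vector field X̃ on B that is both s-projectable onto X and t-projectable onto X, then X is a symmetry of F: [X, F] ⊆ F. -/
import Mathlib

/-!
STATEMENT 18: Let `(B, s, t)` be a bi-submersion over a singular foliation `F` on `M`.  If a
vector field `X` on `M` admits a lift to `B` (a vector field `X̃` on `B` which is both
`s`-projectable and `t`-projectable onto `X`), then `X` is a symmetry of `F`: `[X, F] ⊆ F`.

We work algebraically: `OM = C^∞(M)`, `OB = C^∞(B)` are commutative `K`-algebras, the
submersions are given by the pullback algebra maps `s, t : OM →ₐ[K] OB` (with the submersion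
property that every vector field on `M` admits a projectable lift), vector fields are
derivations, `Γ(ker ds) = {ξ : ξ ∘ s* = 0}`, and the pullback foliations `s⁻¹F`, `t⁻¹F` are
characterized by: they contain every vector field projectable onto an element of `F`, and every
projectable vector field in them projects into `F`.  The bi-submersion condition is
`s⁻¹F = t⁻¹F = Γ(ker ds) + Γ(ker dt)`.
-/

variable {K OM OB : Type*} [CommRing K] [CommRing OM] [CommRing OB]
  [Algebra K OM] [Algebra K OB]

/-- `ξ` is `s`-projectable onto `X`: `ξ(s^* f) = s^*(X f)` for all `f`. -/
def Projects (s : OM →ₐ[K] OB) (ξ : Derivation K OB OB) (X : Derivation K OM OM) : Prop :=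
  ∀ f : OM, ξ (s f) = s (X f)

/-- The module `Γ(ker ds)` of vector fields on `B` killed by `ds`. -/
def kerDiff (s : OM →ₐ[K] OB) : Submodule OB (Derivation K OB OB) where
  carrier := {ξ | ∀ f : OM, ξ (s f) = 0}
  add_mem' := by intro a b ha hb f; simp [ha f, hb f]
  zero_mem' := by intro f; simp
  smul_mem' := by intro c ξ h f; simp [h f]

/-- see the module docstring. -/
theorem lift_to_bisubmersion_implies_symmetry
    (s t : OM →ₐ[K] OB)
    -- `F` is a singular foliation on `M`:
    (F : Submodule OM (Derivation K OM OM))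
    (hF : ∀ X ∈ F, ∀ Y ∈ F, ⁅X, Y⁆ ∈ F)
    -- `s` and `t` are submersions: projectable lifts exist:
    (hs_sub : ∀ X : Derivation K OM OM, ∃ ξ, Projects s ξ X)
    (ht_sub : ∀ X : Derivation K OM OM, ∃ ξ, Projects t ξ X)
    -- the pullback foliations `s⁻¹F` and `t⁻¹F`:
    (sInvF tInvF : Submodule OB (Derivation K OB OB))
    (hs_gen : ∀ X ∈ F, ∀ ξ, Projects s ξ X → ξ ∈ sInvF)
    (hs_proj : ∀ ξ ∈ sInvF, ∀ X, Projects s ξ X → X ∈ F)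
    (ht_gen : ∀ X ∈ F, ∀ ξ, Projects t ξ X → ξ ∈ tInvF)
    (ht_proj : ∀ ξ ∈ tInvF, ∀ X, Projects t ξ X → X ∈ F)
    -- the bi-submersion condition `s⁻¹F = t⁻¹F = Γ(ker ds) + Γ(ker dt)`:
    (hbis : sInvF = kerDiff s ⊔ kerDiff t)
    (hbit : tInvF = kerDiff s ⊔ kerDiff t)
    -- `X̃` is a lift of `X` to the bi-submersion:
    (X : Derivation K OM OM) (Xlift : Derivation K OB OB)
    (hXs : Projects s Xlift X) (hXt : Projects t Xlift X) :
    -- then `X` is a symmetry of `F`: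
    ∀ Y ∈ F, ⁅X, Y⁆ ∈ F := by
  intro Y hY
  -- lift Y along s
  obtain ⟨η, hη⟩ := hs_sub Y
  have hηs : η ∈ sInvF := hs_gen Y hY η hη
  rw [hbis] at hηs
  rcases Submodule.mem_sup.mp hηs with ⟨ξs, hξs, ξt, hξt, hsum⟩
  -- [Xlift, η] projects onto [X, Y]
  have hproj : Projects s ⁅Xlift, η⁆ ⁅X, Y⁆ := by
    intro f
    simp only [Derivation.commutator_apply]
    rw [hη f, hXs f, hXs (Y f), hη (X f), map_sub]
  -- [Xlift, ξs] ∈ kerDiff s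
  have h1 : ⁅Xlift, ξs⁆ ∈ kerDiff s := by
    intro f
    simp only [Derivation.commutator_apply, hξs f, hXs f, hξs (X f), map_zero, sub_zero]
  have h2 : ⁅Xlift, ξt⁆ ∈ kerDiff t := by
    intro f
    simp only [Derivation.commutator_apply, hξt f, hXt f, hξt (X f), map_zero, sub_zero]
  have hmem : ⁅Xlift, η⁆ ∈ sInvF := by
    rw [hbis]
    have : ⁅Xlift, η⁆ = ⁅Xlift, ξs⁆ + ⁅Xlift, ξt⁆ := by
      rw [← hsum, lie_add]
    rw [this]
    exact Submodule.add_mem _ (Submodule.mem_sup_left h1) (Submodule.mem_sup_right h2)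
  exact hs_proj _ hmem _ hproj
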